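/- Let B be an odd ℓ-buoy (ℓ ≥ 5 odd) where each bag is linearly ordered by neighborhood inclusion. Then the following are equivalent: (i) there exist two vertices a, b in some bag B_i such that a strictly dominates b with respect to B_{i-1} but b does not dominate a with respect to B_{i+1}; (ii) B contains an induced pan; (iii) there is an index i such that neither B_{i-1} ∪ B_i nor B_i ∪ B_{i+1} induces a clique. -/

import Mathlib

def IsHole {V : Type*} (G : SimpleGraph V) (n : ℕ) (f : ZMod n → V) : Prop :=
  4 ≤ n ∧ Function.Injective f ∧
    ∀ i j : ZMod n, G.Adj (f i) (f j) ↔ (j = i + 1 ∨ i = j + 1)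

def HasInducedPan {V : Type*} (G : SimpleGraph V) : Prop :=
  ∃ (n : ℕ) (f : ZMod n → V) (x : V),
    IsHole G n f ∧ x ∉ Set.range f ∧ ∃! i : ZMod n, G.Adj x (f i)

def HasEvenHole {V : Type*} (G : SimpleGraph V) : Prop :=
  ∃ (n : ℕ) (f : ZMod n → V), IsHole G n f ∧ Even n

def IsBuoy {V : Type*} (G : SimpleGraph V) (ℓ : ℕ) (B : ZMod ℓ → Set V) : Prop :=
  5 ≤ ℓ ∧
  (∀ i, (B i).Nonempty) ∧
  (∀ i, G.IsClique (B i)) ∧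
  (Pairwise fun i j => Disjoint (B i) (B j)) ∧
  (∀ i, ∀ v ∈ B i, ∃ u ∈ B (i + 1), G.Adj v u) ∧
  (∀ i, ∀ v ∈ B i, ∃ u ∈ B (i - 1), G.Adj v u) ∧
  (∀ i j : ZMod ℓ, j ≠ i → j ≠ i + 1 → j ≠ i - 1 →
    ∀ v ∈ B i, ∀ u ∈ B j, ¬ G.Adj v u)

lemma zmod_cast_inj {k a b : ℕ} (ha : a < k) (hb : b < k) :
    ((a : ZMod k) = (b : ZMod k)) ↔ a = b := by
  haveI : NeZero k := ⟨by omega⟩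
  constructor
  · intro h
    have := congrArg ZMod.val h
    rwa [ZMod.val_cast_of_lt ha, ZMod.val_cast_of_lt hb] at this
  · rintro rfl; rfl

lemma zmod_succ_iff {k : ℕ} (hk : 2 ≤ k) (s t : ZMod k) :
    t = s + 1 ↔ (t.val = s.val + 1 ∨ (s.val = k - 1 ∧ t.val = 0)) := by
  haveI : NeZero k := ⟨by omega⟩
  haveI : Fact (1 < k) := ⟨by omega⟩
  have hs := ZMod.val_lt s
  have ht := ZMod.val_lt t
  have key : (s + 1).val = (s.val + 1) % k := by
    rw [ZMod.val_add, ZMod.val_one]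
  have hiff : t = s + 1 ↔ t.val = (s + 1).val :=
    ⟨fun h => by rw [h], fun h => ZMod.val_injective _ h⟩
  rw [hiff, key]
  rcases Nat.lt_or_ge (s.val + 1) k with h | h
  · rw [Nat.mod_eq_of_lt h]
    constructor
    · intro h'; left; exact h'
    · rintro (h' | ⟨h1, h2⟩)
      · exact h'
      · omega
  · have hs1 : s.val = k - 1 := by omega
    have : (s.val + 1) % k = 0 := by
      rw [hs1, Nat.sub_add_cancel (by omega), Nat.mod_self]
    rw [this]
    constructor
    · intro h'; right; exact ⟨hs1, h'⟩
    · rintro (h' | ⟨h1, h2⟩)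
      · omega
      · exact h2

lemma mk_hole {V : Type*} {G : SimpleGraph V} {k : ℕ} (hk : 4 ≤ k) (v : ℕ → V)
    (hadj : ∀ m, m + 1 < k → G.Adj (v m) (v (m+1)))
    (hwrap : G.Adj (v (k-1)) (v 0))
    (hfar : ∀ m m', m < m' → m' < k → m' ≠ m + 1 → ¬(m = 0 ∧ m' = k - 1) →
      ¬ G.Adj (v m) (v m') ∧ v m ≠ v m') :
    IsHole G k (fun t : ZMod k => v t.val) := by
  haveI : NeZero k := ⟨by omega⟩
  have main : ∀ m m', m < m' → m' < k → G.Adj (v m) (v m') →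
      m' = m + 1 ∨ (m = 0 ∧ m' = k - 1) := by
    intro m m' h h' hA
    by_cases h1 : m' = m + 1
    · exact Or.inl h1
    by_cases h2 : m = 0 ∧ m' = k - 1
    · exact Or.inr h2
    · exact absurd hA (hfar m m' h h' h1 h2).1
  have adjiff : ∀ s t : ZMod k, G.Adj (v s.val) (v t.val) ↔ (t = s + 1 ∨ s = t + 1) := by
    intro s t
    rw [zmod_succ_iff (by omega) s t, zmod_succ_iff (by omega) t s]
    have hs := ZMod.val_lt s
    have ht := ZMod.val_lt t
    constructor
    · intro hA
      rcases lt_trichotomy s.val t.val with h | h | h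
      · rcases main _ _ h ht hA with h' | h'
        · exact Or.inl (Or.inl h')
        · exact Or.inr (Or.inr ⟨h'.2, h'.1⟩)
      · exfalso
        have : s = t := ZMod.val_injective _ h
        rw [this] at hA
        exact G.irrefl hA
      · rcases main _ _ h hs hA.symm with h' | h'
        · exact Or.inr (Or.inl h')
        · exact Or.inl (Or.inr ⟨h'.2, h'.1⟩)
    · rintro ((h | ⟨h1, h2⟩) | (h | ⟨h1, h2⟩))
      · rw [h]; exact hadj _ (by omega)
      · rw [h1, h2]; exact hwrap
      · rw [h]; exact (hadj _ (by omega)).symm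
      · rw [h1, h2]; exact hwrap.symm
  refine ⟨hk, ?_, fun i j => adjiff i j⟩
  intro s t h
  by_contra hne
  have hv : s.val ≠ t.val := fun hh => hne (ZMod.val_injective _ hh)
  have hs := ZMod.val_lt s
  have ht := ZMod.val_lt t
  have hsym : ∀ m m', m < m' → m' < k → v m ≠ v m' := by
    intro m m' hlt hlt' 
    by_cases h1 : m' = m + 1
    · subst h1; exact (hadj m hlt').ne
    by_cases h2 : m = 0 ∧ m' = k - 1
    · rw [h2.1, h2.2]; exact hwrap.ne'
    · exact (hfar m m' hlt hlt' h1 h2).2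
  rcases lt_trichotomy s.val t.val with hlt | hlt | hlt
  · exact hsym _ _ hlt ht h
  · exact hv hlt
  · exact hsym _ _ hlt hs h.symm

section Buoy

variable {V : Type*} {G : SimpleGraph V} {ℓ : ℕ} {B : ZMod ℓ → Set V}

lemma ne_bags (hdisj : Pairwise fun i j => Disjoint (B i) (B j))
    {q r : ZMod ℓ} {x y : V} (hx : x ∈ B q) (hy : y ∈ B r) (h : q ≠ r) : x ≠ y :=
  fun he => Set.disjoint_left.1 (hdisj h) hx (he ▸ hy)

lemma pendant (hl : 5 ≤ ℓ)
    (hdisj : Pairwise fun i j => Disjoint (B i) (B j))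
    (hfar : ∀ i j : ZMod ℓ, j ≠ i → j ≠ i + 1 → j ≠ i - 1 →
      ∀ v ∈ B i, ∀ u ∈ B j, ¬ G.Adj v u)
    {i : ZMod ℓ} {k : ℕ} (hk : 5 ≤ k) (v : ℕ → V) (bag : ℕ → ZMod ℓ)
    (hmem : ∀ m, m < k → v m ∈ B (bag m))
    (hbag : ∀ m, m < k →
      (bag m = i - 1 → m = 0) ∧ (bag m = i → m = 1) ∧ (bag m = i + 1 → m = 2))
    {z a w b : V} (hv0 : v 0 = z) (hv1 : v 1 = a) (hv2 : v 2 = w)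
    (hb : b ∈ B i)
    (hba : G.Adj b a) (hbz : ¬ G.Adj b z) (hbw : ¬ G.Adj b w) :
    b ∉ Set.range (fun t : ZMod k => v t.val) ∧
      ∃! t : ZMod k, G.Adj b (v t.val) := by
  haveI : NeZero k := ⟨by omega⟩
  haveI : Fact (1 < k) := ⟨by omega⟩
  have hval1 : (1 : ZMod k).val = 1 := ZMod.val_one k
  constructor
  · rintro ⟨t, ht⟩
    simp only at ht
    have hm : t.val < k := ZMod.val_lt t
    have hvm := hmem t.val hm
    by_cases hbg : bag t.val = i
    · have h1 : t.val = 1 := (hbag t.val hm).2.1 hbg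
      rw [h1, hv1] at ht
      exact hba.ne' ht
    · exact ne_bags hdisj hvm hb hbg ht
  · refine ⟨1, ?_, ?_⟩
    · show G.Adj b (v (1 : ZMod k).val)
      rw [hval1, hv1]; exact hba
    · intro t hadjt
      have hm : t.val < k := ZMod.val_lt t
      have hvm := hmem t.val hm
      have h3 : bag t.val = i ∨ bag t.val = i + 1 ∨ bag t.val = i - 1 := by
        by_contra hc; push_neg at hc
        exact hfar i (bag t.val) hc.1 hc.2.1 hc.2.2 b hb (v t.val) hvm hadjt
      rcases h3 with h | h | h
      · have hm1 : t.val = 1 := (hbag _ hm).2.1 h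
        exact ZMod.val_injective _ (by rw [hm1, hval1])
      · have hm2 : t.val = 2 := (hbag _ hm).2.2 h
        exact absurd (by rwa [hm2, hv2] at hadjt) hbw
      · have hm0 : t.val = 0 := (hbag _ hm).1 h
        exact absurd (by rwa [hm0, hv0] at hadjt) hbz


lemma far2 (hl : 5 ≤ ℓ)
    (hdisj : Pairwise fun i j => Disjoint (B i) (B j))
    (hfar : ∀ i j : ZMod ℓ, j ≠ i → j ≠ i + 1 → j ≠ i - 1 →
      ∀ v ∈ B i, ∀ u ∈ B j, ¬ G.Adj v u)
    {q : ZMod ℓ} {d : ℕ} (hd2 : 2 ≤ d) (hdl : d ≤ ℓ - 2)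
    {x y : V} (hx : x ∈ B q) (hy : y ∈ B (q + (d : ZMod ℓ))) :
    ¬ G.Adj x y ∧ x ≠ y := by
  have h1 : q + (d : ZMod ℓ) ≠ q := by
    intro h
    have hd0 : (d : ZMod ℓ) = ((0 : ℕ) : ZMod ℓ) := by push_cast; linear_combination h
    have := (zmod_cast_inj (by omega) (by omega)).1 hd0
    omega
  have h2 : q + (d : ZMod ℓ) ≠ q + 1 := by
    intro h
    have hd0 : (d : ZMod ℓ) = ((1 : ℕ) : ZMod ℓ) := by push_cast; linear_combination h
    have := (zmod_cast_inj (by omega) (by omega)).1 hd0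
    omega
  have h3 : q + (d : ZMod ℓ) ≠ q - 1 := by
    intro h
    have hd0 : ((d + 1 : ℕ) : ZMod ℓ) = ((0 : ℕ) : ZMod ℓ) := by
      push_cast; linear_combination h
    have := (zmod_cast_inj (by omega) (by omega)).1 hd0
    omega
  exact ⟨hfar q _ h1 h2 h3 x hx y hy, ne_bags hdisj hx hy h1.symm⟩

lemma chain (hnext : ∀ i, ∀ v ∈ B i, ∃ u ∈ B (i + 1), G.Adj v u)
    (i : ZMod ℓ) {w : V} (hw : w ∈ B i) :
    ∃ u : ℕ → V, u 0 = w ∧ (∀ n : ℕ, u n ∈ B (i + (n : ZMod ℓ))) ∧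
      ∀ n : ℕ, G.Adj (u n) (u (n + 1)) := by
  classical
  have F : ∀ (q : ZMod ℓ) (x : V), ∃ y, x ∈ B q → (y ∈ B (q + 1) ∧ G.Adj x y) := by
    intro q x
    by_cases hx : x ∈ B q
    · obtain ⟨y, hy, hxy⟩ := hnext q x hx
      exact ⟨y, fun _ => ⟨hy, hxy⟩⟩
    · exact ⟨x, fun h => absurd h hx⟩
  choose F hF using F
  let u : ℕ → V := fun n => Nat.rec w (fun n prev => F (i + (n : ZMod ℓ)) prev) n
  have hmem : ∀ n : ℕ, u n ∈ B (i + (n : ZMod ℓ)) := by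
    intro n
    induction n with
    | zero => simpa [show u 0 = w from rfl] using hw
    | succ n ih =>
      have h1 : u (n + 1) = F (i + (n : ZMod ℓ)) (u n) := rfl
      have h2 := (hF (i + (n : ZMod ℓ)) (u n) ih).1
      rw [h1]
      have hcast : i + ((n + 1 : ℕ) : ZMod ℓ) = i + (n : ZMod ℓ) + 1 := by
        push_cast; ring
      rw [hcast]
      exact h2
  exact ⟨u, rfl, hmem, fun n => (hF (i + (n : ZMod ℓ)) (u n) (hmem n)).2⟩

lemma uniform_pan (hl : 5 ≤ ℓ)
    (hdisj : Pairwise fun i j => Disjoint (B i) (B j))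
    (hfar : ∀ i j : ZMod ℓ, j ≠ i → j ≠ i + 1 → j ≠ i - 1 →
      ∀ v ∈ B i, ∀ u ∈ B j, ¬ G.Adj v u)
    {i : ZMod ℓ} (v : ℕ → V)
    (hmem : ∀ m, m < ℓ → v m ∈ B (i - 1 + (m : ZMod ℓ)))
    (hadjc : ∀ m, m + 1 < ℓ → G.Adj (v m) (v (m + 1)))
    (hwrap : G.Adj (v (ℓ - 1)) (v 0))
    {z a w b : V} (hv0 : v 0 = z) (hv1 : v 1 = a) (hv2 : v 2 = w)
    (hb : b ∈ B i) (hba : G.Adj b a) (hbz : ¬ G.Adj b z) (hbw : ¬ G.Adj b w) :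
    ∃ (k : ℕ) (f : ZMod k → V) (x : V), IsHole G k f ∧
      Set.range f ⊆ ⋃ j, B j ∧ x ∈ ⋃ j, B j ∧ x ∉ Set.range f ∧
      ∃! t : ZMod k, G.Adj x (f t) := by
  haveI : NeZero ℓ := ⟨by omega⟩
  have hfarv : ∀ m m', m < m' → m' < ℓ → m' ≠ m + 1 →
      ¬(m = 0 ∧ m' = ℓ - 1) → ¬ G.Adj (v m) (v m') ∧ v m ≠ v m' := by
    intro m m' hmm hm' hne1 hne2
    have hx : v m ∈ B (i - 1 + (m : ZMod ℓ)) := hmem m (by omega)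
    have hy : v m' ∈ B ((i - 1 + (m : ZMod ℓ)) + ((m' - m : ℕ) : ZMod ℓ)) := by
      have := hmem m' hm'
      rwa [show (i - 1 + (m : ZMod ℓ)) + ((m' - m : ℕ) : ZMod ℓ)
          = i - 1 + (m' : ZMod ℓ) by rw [Nat.cast_sub (by omega)]; push_cast; ring]
    exact far2 hl hdisj hfar (by omega) (by omega) hx hy
  have hbag : ∀ m, m < ℓ →
      ((i - 1 + (m : ZMod ℓ)) = i - 1 → m = 0) ∧ ((i - 1 + (m : ZMod ℓ)) = i → m = 1) ∧
        ((i - 1 + (m : ZMod ℓ)) = i + 1 → m = 2) := by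
    intro m hmlt
    refine ⟨fun hq => ?_, fun hq => ?_, fun hq => ?_⟩
    · have h0 : (m : ZMod ℓ) = ((0 : ℕ) : ZMod ℓ) := by push_cast; linear_combination hq
      exact (zmod_cast_inj hmlt (by omega)).1 h0
    · have h0 : (m : ZMod ℓ) = ((1 : ℕ) : ZMod ℓ) := by push_cast; linear_combination hq
      exact (zmod_cast_inj hmlt (by omega)).1 h0
    · have h0 : (m : ZMod ℓ) = ((2 : ℕ) : ZMod ℓ) := by push_cast; linear_combination hq
      exact (zmod_cast_inj hmlt (by omega)).1 h0
  have hpend := pendant hl hdisj hfar (k := ℓ) (by omega) v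
    (fun m => i - 1 + (m : ZMod ℓ)) hmem hbag hv0 hv1 hv2 hb hba hbz hbw
  refine ⟨ℓ, fun t : ZMod ℓ => v t.val, b,
    mk_hole (by omega) v hadjc hwrap hfarv, ?_, Set.mem_iUnion.2 ⟨i, hb⟩,
    hpend.1, hpend.2⟩
  rintro y ⟨t, rfl⟩
  exact Set.mem_iUnion.2 ⟨_, hmem t.val (ZMod.val_lt t)⟩

lemma i_to_pan (hB : IsBuoy G ℓ B)
    (h : ∃ (i : ZMod ℓ) (a b : V), a ∈ B i ∧ b ∈ B i ∧
        (∀ z ∈ B (i - 1), G.Adj b z → G.Adj a z) ∧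
        (∃ z ∈ B (i - 1), G.Adj a z ∧ ¬ G.Adj b z) ∧
        ¬ (∀ z ∈ B (i + 1), G.Adj a z → G.Adj b z)) :
    ∃ (k : ℕ) (f : ZMod k → V) (x : V), IsHole G k f ∧
      Set.range f ⊆ ⋃ j, B j ∧ x ∈ ⋃ j, B j ∧ x ∉ Set.range f ∧
      ∃! t : ZMod k, G.Adj x (f t) := by
  obtain ⟨hl, hne, hclique, hdisj, hnext, hprev, hfar⟩ := hB
  obtain ⟨i, a, b, ha, hb, hdom, ⟨z, hz, haz, hbz⟩, hnd⟩ := h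
  haveI : Fact (1 < ℓ) := ⟨by omega⟩
  haveI : NeZero ℓ := ⟨by omega⟩
  push_neg at hnd
  obtain ⟨w, hw, haw, hbw⟩ := hnd
  have hba : b ≠ a := fun h => hbz (h ▸ haz)
  have hadjba : G.Adj b a := hclique i hb ha hba
  obtain ⟨u, hu0, humem, huadj⟩ := chain hnext (i + 1) hw
  obtain ⟨s, hs, hzs⟩ := hprev (i - 1) z hz
  rw [show i - 1 - 1 = i - 2 by ring] at hs
  have huN : u (ℓ - 3) ∈ B (i - 2) := by
    have := humem (ℓ - 3)
    rwa [show i + 1 + ((ℓ - 3 : ℕ) : ZMod ℓ) = i - 2 by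
      rw [Nat.cast_sub (by omega), ZMod.natCast_self]; push_cast; ring] at this
  have huN1 : u (ℓ - 4) ∈ B (i - 3) := by
    have := humem (ℓ - 4)
    rwa [show i + 1 + ((ℓ - 4 : ℕ) : ZMod ℓ) = i - 3 by
      rw [Nat.cast_sub (by omega), ZMod.natCast_self]; push_cast; ring] at this
  have hadj34 : G.Adj (u (ℓ - 4)) (u (ℓ - 3)) := by
    have := huadj (ℓ - 4)
    rwa [show ℓ - 4 + 1 = ℓ - 3 by omega] at this
  by_cases hA : ¬ G.Adj (u (ℓ - 3)) z ∧ ¬ G.Adj (u (ℓ - 4)) s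
  · -- Case B : hole of length ℓ + 1
    obtain ⟨hA1, hA2⟩ := hA
    set v : ℕ → V := fun m =>
      if m = 0 then z else if m = 1 then a else if m = ℓ then s else u (m - 2) with hvdef
    have hv0 : v 0 = z := rfl
    have hv1 : v 1 = a := by simp [hvdef]
    have hvm : ∀ m, 2 ≤ m → m ≠ ℓ → v m = u (m - 2) := by
      intro m h2 hml
      simp only [hvdef]
      rw [if_neg (by omega), if_neg (by omega), if_neg hml]
    have hvl : v ℓ = s := by
      simp only [hvdef]
      rw [if_neg (show ¬ (ℓ = 0) by omega), if_neg (show ¬ (ℓ = 1) by omega)]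
      simp
    have hv2 : v 2 = w := by rw [hvm 2 (by omega) (by omega), hu0]
    set bag : ℕ → ZMod ℓ := fun m => if m = ℓ then i - 2 else i - 1 + (m : ZMod ℓ)
      with hbagdef
    have hbagu : ∀ m, m ≠ ℓ → bag m = i - 1 + (m : ZMod ℓ) := by
      intro m hml; simp only [hbagdef]; rw [if_neg hml]
    have hmem : ∀ m, m < ℓ + 1 → v m ∈ B (bag m) := by
      intro m hm
      by_cases hml : m = ℓ
      · rw [hml, hvl]
        have hbl : bag ℓ = i - 2 := by simp only [hbagdef]; simp
        rw [hbl]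
        exact hs
      rw [hbagu m hml]
      rcases Nat.lt_or_ge m 2 with h2 | h2
      · interval_cases m
        · simpa [hv0] using hz
        · rw [hv1]
          rw [show i - 1 + ((1 : ℕ) : ZMod ℓ) = i by push_cast; ring]
          exact ha
      · rw [hvm m h2 hml]
        have := humem (m - 2)
        rwa [show i + 1 + ((m - 2 : ℕ) : ZMod ℓ) = i - 1 + (m : ZMod ℓ) by
          rw [Nat.cast_sub h2]; push_cast; ring] at this
    have hadjc : ∀ m, m + 1 < ℓ + 1 → G.Adj (v m) (v (m + 1)) := by
      intro m hm
      match m, hm with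
      | 0, _ => rw [hv0, hv1]; exact haz.symm
      | 1, _ => rw [hv1, hv2]; exact haw
      | (n+2), hm =>
        by_cases hend : n + 3 = ℓ
        · rw [hvm (n+2) (by omega) (by omega), show n + 2 + 1 = ℓ from hend, hvl]
          have hne_s : u (ℓ - 3) ≠ s := fun h => hA2 (h ▸ hadj34)
          have : u (n + 2 - 2) = u (ℓ - 3) := by rw [show n + 2 - 2 = ℓ - 3 by omega]
          rw [this]
          exact hclique (i - 2) huN hs hne_s
        · rw [hvm (n+2) (by omega) (by omega), hvm (n+3) (by omega) hend]
          have := huadj n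
          simpa using this
    have hwrap : G.Adj (v (ℓ + 1 - 1)) (v 0) := by
      rw [show ℓ + 1 - 1 = ℓ from rfl, hvl, hv0]
      exact hzs.symm
    have hfarv : ∀ m m', m < m' → m' < ℓ + 1 → m' ≠ m + 1 →
        ¬(m = 0 ∧ m' = ℓ + 1 - 1) → ¬ G.Adj (v m) (v m') ∧ v m ≠ v m' := by
      intro m m' hmm hm' hne1 hne2
      rw [show ℓ + 1 - 1 = ℓ from rfl] at hne2
      by_cases hml : m' = ℓ
      · -- m' is the extra vertex s ; 1 ≤ m ≤ ℓ - 2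
        rw [hml, hvl]
        have hm1 : 1 ≤ m := by omega
        have hm2 : m ≤ ℓ - 2 := by omega
        by_cases hmtop : m = ℓ - 2
        · subst hmtop
          rw [hvm (ℓ - 2) (by omega) (by omega), show ℓ - 2 - 2 = ℓ - 4 by omega]
          refine ⟨hA2, ne_bags hdisj huN1 hs ?_⟩
          intro hh
          have : ((1 : ℕ) : ZMod ℓ) = ((0 : ℕ) : ZMod ℓ) := by
            push_cast; linear_combination -hh
          have := (zmod_cast_inj (by omega) (by omega)).1 this
          omega
        · have hx : v m ∈ B (i - 1 + (m : ZMod ℓ)) := by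
            have := hmem m (by omega)
            rwa [hbagu m (by omega)] at this
          have hy : s ∈ B ((i - 1 + (m : ZMod ℓ)) + ((ℓ - 1 - m : ℕ) : ZMod ℓ)) := by
            rwa [show (i - 1 + (m : ZMod ℓ)) + ((ℓ - 1 - m : ℕ) : ZMod ℓ) = i - 2 by
              rw [Nat.cast_sub (by omega), Nat.cast_sub (by omega), ZMod.natCast_self]
              push_cast; ring]
          exact far2 hl hdisj hfar (by omega) (by omega) hx hy
      · by_cases hwr : m = 0 ∧ m' = ℓ - 1
        · -- the pair (z, u (ℓ - 3))
          obtain ⟨rfl, rfl⟩ := hwr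
          rw [hv0, hvm (ℓ - 1) (by omega) (by omega), show ℓ - 1 - 2 = ℓ - 3 by omega]
          refine ⟨fun h => hA1 h.symm, ne_bags hdisj hz huN ?_⟩
          intro hh
          have : ((1 : ℕ) : ZMod ℓ) = ((0 : ℕ) : ZMod ℓ) := by
            push_cast; linear_combination hh
          have := (zmod_cast_inj (by omega) (by omega)).1 this
          omega
        · have hx : v m ∈ B (i - 1 + (m : ZMod ℓ)) := by
            have := hmem m (by omega)
            rwa [hbagu m (by omega)] at this
          have hy : v m' ∈ B ((i - 1 + (m : ZMod ℓ)) + ((m' - m : ℕ) : ZMod ℓ)) := by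
            have := hmem m' (by omega)
            rw [hbagu m' hml] at this
            rwa [show (i - 1 + (m : ZMod ℓ)) + ((m' - m : ℕ) : ZMod ℓ)
                = i - 1 + (m' : ZMod ℓ) by rw [Nat.cast_sub (by omega)]; push_cast; ring]
          exact far2 hl hdisj hfar (by omega) (by omega) hx hy
    have hbag : ∀ m, m < ℓ + 1 →
        (bag m = i - 1 → m = 0) ∧ (bag m = i → m = 1) ∧ (bag m = i + 1 → m = 2) := by
      intro m hm
      by_cases hml : m = ℓ
      · have hbl : bag m = i - 2 := by rw [hml]; simp only [hbagdef]; simp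
        rw [hbl]
        refine ⟨fun hq => ?_, fun hq => ?_, fun hq => ?_⟩ <;> exfalso
        · have : ((1 : ℕ) : ZMod ℓ) = ((0 : ℕ) : ZMod ℓ) := by
            push_cast; linear_combination -hq
          have := (zmod_cast_inj (by omega) (by omega)).1 this; omega
        · have : ((2 : ℕ) : ZMod ℓ) = ((0 : ℕ) : ZMod ℓ) := by
            push_cast; linear_combination -hq
          have := (zmod_cast_inj (by omega) (by omega)).1 this; omega
        · have : ((3 : ℕ) : ZMod ℓ) = ((0 : ℕ) : ZMod ℓ) := by
            push_cast; linear_combination -hq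
          have := (zmod_cast_inj (by omega) (by omega)).1 this; omega
      · rw [hbagu m hml]
        have hmlt : m < ℓ := by omega
        refine ⟨fun hq => ?_, fun hq => ?_, fun hq => ?_⟩
        · have h0 : (m : ZMod ℓ) = ((0 : ℕ) : ZMod ℓ) := by push_cast; linear_combination hq
          exact (zmod_cast_inj hmlt (by omega)).1 h0
        · have h0 : (m : ZMod ℓ) = ((1 : ℕ) : ZMod ℓ) := by push_cast; linear_combination hq
          exact (zmod_cast_inj hmlt (by omega)).1 h0
        · have h0 : (m : ZMod ℓ) = ((2 : ℕ) : ZMod ℓ) := by push_cast; linear_combination hq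
          exact (zmod_cast_inj hmlt (by omega)).1 h0
    have hpend := pendant hl hdisj hfar (k := ℓ + 1) (by omega) v bag hmem hbag
      hv0 hv1 hv2 hb hadjba hbz hbw
    refine ⟨ℓ + 1, fun t : ZMod (ℓ + 1) => v t.val, b,
      mk_hole (by omega) v hadjc hwrap hfarv, ?_, Set.mem_iUnion.2 ⟨i, hb⟩,
      hpend.1, hpend.2⟩
    rintro y ⟨t, rfl⟩
    exact Set.mem_iUnion.2 ⟨_, hmem t.val (ZMod.val_lt t)⟩
  · -- Cases A and C : hole of length ℓ
    rw [not_and_or, not_not, not_not] at hA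
    rcases hA with hA | hC
    · -- case A : u (ℓ - 3) adjacent to z
      set v : ℕ → V := fun m => if m = 0 then z else if m = 1 then a else u (m - 2)
        with hvdef
      have hv0 : v 0 = z := rfl
      have hv1 : v 1 = a := by simp [hvdef]
      have hvm : ∀ m, 2 ≤ m → v m = u (m - 2) := by
        intro m h2
        simp only [hvdef]
        rw [if_neg (by omega), if_neg (by omega)]
      have hv2 : v 2 = w := by rw [hvm 2 (by omega), hu0]
      have hmem : ∀ m, m < ℓ → v m ∈ B (i - 1 + (m : ZMod ℓ)) := by
        intro m hm
        rcases Nat.lt_or_ge m 2 with h2 | h2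
        · interval_cases m
          · simpa [hv0] using hz
          · rw [hv1, show i - 1 + ((1 : ℕ) : ZMod ℓ) = i by push_cast; ring]
            exact ha
        · rw [hvm m h2]
          have := humem (m - 2)
          rwa [show i + 1 + ((m - 2 : ℕ) : ZMod ℓ) = i - 1 + (m : ZMod ℓ) by
            rw [Nat.cast_sub h2]; push_cast; ring] at this
      have hadjc : ∀ m, m + 1 < ℓ → G.Adj (v m) (v (m + 1)) := by
        intro m hm
        match m, hm with
        | 0, _ => rw [hv0, hv1]; exact haz.symm
        | 1, _ => rw [hv1, hv2]; exact haw
        | (n+2), hm =>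
          rw [hvm (n+2) (by omega), hvm (n+3) (by omega)]
          simpa using huadj n
      have hwrap : G.Adj (v (ℓ - 1)) (v 0) := by
        rw [hvm (ℓ - 1) (by omega), hv0, show ℓ - 1 - 2 = ℓ - 3 by omega]
        exact hA
      exact uniform_pan hl hdisj hfar v hmem hadjc hwrap hv0 hv1 hv2 hb hadjba hbz hbw
    · -- case C : u (ℓ - 4) adjacent to s
      set v : ℕ → V := fun m =>
        if m = 0 then z else if m = 1 then a else if m = ℓ - 1 then s else u (m - 2)
        with hvdef
      have hv0 : v 0 = z := rfl
      have hv1 : v 1 = a := by simp [hvdef]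
      have hvm : ∀ m, 2 ≤ m → m ≠ ℓ - 1 → v m = u (m - 2) := by
        intro m h2 hml
        simp only [hvdef]
        rw [if_neg (by omega), if_neg (by omega), if_neg hml]
      have hvl : v (ℓ - 1) = s := by
        simp only [hvdef]
        rw [if_neg (show ¬ (ℓ - 1 = 0) by omega), if_neg (show ¬ (ℓ - 1 = 1) by omega)]
        simp
      have hv2 : v 2 = w := by rw [hvm 2 (by omega) (by omega), hu0]
      have hmem : ∀ m, m < ℓ → v m ∈ B (i - 1 + (m : ZMod ℓ)) := by
        intro m hm
        by_cases hml : m = ℓ - 1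
        · subst hml
          rw [hvl, show i - 1 + ((ℓ - 1 : ℕ) : ZMod ℓ) = i - 2 by
            rw [Nat.cast_sub (by omega), ZMod.natCast_self]; push_cast; ring]
          exact hs
        rcases Nat.lt_or_ge m 2 with h2 | h2
        · interval_cases m
          · simpa [hv0] using hz
          · rw [hv1, show i - 1 + ((1 : ℕ) : ZMod ℓ) = i by push_cast; ring]
            exact ha
        · rw [hvm m h2 hml]
          have := humem (m - 2)
          rwa [show i + 1 + ((m - 2 : ℕ) : ZMod ℓ) = i - 1 + (m : ZMod ℓ) by
            rw [Nat.cast_sub h2]; push_cast; ring] at this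
      have hadjc : ∀ m, m + 1 < ℓ → G.Adj (v m) (v (m + 1)) := by
        intro m hm
        match m, hm with
        | 0, _ => rw [hv0, hv1]; exact haz.symm
        | 1, _ =>
          rw [hv1, hvm 2 (by omega) (by omega), hu0]
          exact haw
        | (n+2), hm =>
          by_cases hend : n + 3 = ℓ - 1
          · rw [hvm (n+2) (by omega) (by omega), show n + 2 + 1 = ℓ - 1 from hend, hvl,
              show n + 2 - 2 = ℓ - 4 by omega]
            exact hC
          · rw [hvm (n+2) (by omega) (by omega), hvm (n+3) (by omega) hend]
            simpa using huadj n
      have hwrap : G.Adj (v (ℓ - 1)) (v 0) := by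
        rw [hvl, hv0]
        exact hzs.symm
      exact uniform_pan hl hdisj hfar v hmem hadjc hwrap hv0 hv1 hv2 hb hadjba hbz hbw

lemma bad_to_i (hB : IsBuoy G ℓ B)
    (horder : ∀ i : ZMod ℓ, ∀ a ∈ B i, ∀ b ∈ B i,
      (∀ z ∈ ⋃ j, B j, z ≠ b → G.Adj a z → G.Adj b z) ∨
      (∀ z ∈ ⋃ j, B j, z ≠ a → G.Adj b z → G.Adj a z))
    (h : ∃ i : ZMod ℓ, ¬ G.IsClique (B (i - 1) ∪ B i) ∧
      ¬ G.IsClique (B i ∪ B (i + 1))) :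
    ∃ (i : ZMod ℓ) (a b : V), a ∈ B i ∧ b ∈ B i ∧
      (∀ z ∈ B (i - 1), G.Adj b z → G.Adj a z) ∧
      (∃ z ∈ B (i - 1), G.Adj a z ∧ ¬ G.Adj b z) ∧
      ¬ (∀ z ∈ B (i + 1), G.Adj a z → G.Adj b z) := by
  obtain ⟨hl, hne, hclique, hdisj, hnext, hprev, hfar⟩ := hB
  haveI : Fact (1 < ℓ) := ⟨by omega⟩
  obtain ⟨i, h1, h2⟩ := h
  have mem : ∀ {q : ZMod ℓ} {x : V}, x ∈ B q → x ∈ ⋃ j, B j :=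
    fun h => Set.mem_iUnion.2 ⟨_, h⟩
  have pair : ∀ (p q : ZMod ℓ), ¬ G.IsClique (B p ∪ B q) →
      ∃ x ∈ B p, ∃ y ∈ B q, ¬ G.Adj x y := by
    intro p q hnc
    rw [SimpleGraph.isClique_iff, Set.Pairwise] at hnc
    push_neg at hnc
    obtain ⟨x, hx, y, hy, hxy, hnadj⟩ := hnc
    rcases hx with hx | hx <;> rcases hy with hy | hy
    · exact absurd (hclique p hx hy hxy) hnadj
    · exact ⟨x, hx, y, hy, hnadj⟩
    · exact ⟨y, hy, x, hx, fun h => hnadj h.symm⟩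
    · exact absurd (hclique q hx hy hxy) hnadj
  obtain ⟨z, hz, b, hb, hnzb⟩ := pair (i - 1) i h1
  obtain ⟨c, hc, w, hw, hcw⟩ := pair i (i + 1) h2
  have hbz : ¬ G.Adj b z := fun h => hnzb h.symm
  have h10 : i - 1 ≠ i := fun hh => one_ne_zero (α := ZMod ℓ) (by linear_combination -hh)
  have h20 : i + 1 ≠ i := fun hh => one_ne_zero (α := ZMod ℓ) (by linear_combination hh)
  obtain ⟨a, ha, hza⟩ := hnext (i - 1) z hz
  rw [show i - 1 + 1 = i by ring] at ha
  have haz : G.Adj a z := hza.symm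
  obtain ⟨d, hd, hwd⟩ := hprev (i + 1) w hw
  rw [show i + 1 - 1 = i by ring] at hd
  have hdw : G.Adj d w := hwd.symm
  -- vertices of B i are distinct from z and w
  have znei : ∀ {x : V}, x ∈ B i → x ≠ z := fun hx => ne_bags hdisj hx hz h10.symm
  have wnei : ∀ {x : V}, x ∈ B i → x ≠ w := fun hx => ne_bags hdisj hx hw h20.symm
  have znei' : ∀ {x : V}, x ∈ B (i - 1) → ∀ {y : V}, y ∈ B i → x ≠ y := by
    intro x hx y hy; exact ne_bags hdisj hx hy h10
  have wnei' : ∀ {x : V}, x ∈ B (i + 1) → ∀ {y : V}, y ∈ B i → x ≠ y := by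
    intro x hx y hy; exact ne_bags hdisj hx hy h20
  -- a dominates b
  have Dab : ∀ x ∈ ⋃ j, B j, x ≠ a → G.Adj b x → G.Adj a x := by
    rcases horder i a ha b hb with hd' | hd'
    · exact absurd (hd' z (mem hz) (znei hb).symm haz) hbz
    · exact hd'
  -- d dominates c
  have Ddc : ∀ x ∈ ⋃ j, B j, x ≠ d → G.Adj c x → G.Adj d x := by
    rcases horder i d hd c hc with hd' | hd'
    · exact absurd (hd' w (mem hw) (wnei hc).symm hdw) hcw
    · exact hd'
  rcases horder i b hb c hc with hCB | hBC
  · -- c dominates b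
    have hbw : ¬ G.Adj b w := fun h => hcw (hCB w (mem hw) (wnei hc).symm h)
    rcases horder i a ha d hd with hDA | hAD
    · -- d dominates a : use the pair (d, b)
      have hdz : G.Adj d z := hDA z (mem hz) (znei hd).symm haz
      refine ⟨i, d, b, hd, hb, fun z' hz' hbz' => ?_, ⟨z, hz, hdz, hbz⟩, fun H => ?_⟩
      · exact hDA z' (mem hz') (znei' hz' hd)
          (Dab z' (mem hz') (znei' hz' ha) hbz')
      · exact hbw (H w hw hdw)
    · -- a dominates d : use the pair (a, b)
      have haw : G.Adj a w := hAD w (mem hw) (wnei ha).symm hdw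
      refine ⟨i, a, b, ha, hb, fun z' hz' hbz' => ?_, ⟨z, hz, haz, hbz⟩, fun H => ?_⟩
      · exact Dab z' (mem hz') (znei' hz' ha) hbz'
      · exact hbw (H w hw haw)
  · -- b dominates c
    have hcz : ¬ G.Adj c z := fun h => hbz (hBC z (mem hz) (znei hb).symm h)
    rcases horder i a ha d hd with hDA | hAD
    · -- d dominates a : use the pair (d, c)
      have hdz : G.Adj d z := hDA z (mem hz) (znei hd).symm haz
      refine ⟨i, d, c, hd, hc, fun z' hz' hcz' => ?_, ⟨z, hz, hdz, hcz⟩, fun H => ?_⟩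
      · exact hDA z' (mem hz') (znei' hz' hd)
          (Dab z' (mem hz') (znei' hz' ha)
            (hBC z' (mem hz') (znei' hz' hb) hcz'))
      · exact hcw (H w hw hdw)
    · -- a dominates d : use the pair (a, c)
      have haw : G.Adj a w := hAD w (mem hw) (wnei ha).symm hdw
      refine ⟨i, a, c, ha, hc, fun z' hz' hcz' => ?_, ⟨z, hz, haz, hcz⟩, fun H => ?_⟩
      · exact Dab z' (mem hz') (znei' hz' ha)
          (hBC z' (mem hz') (znei' hz' hb) hcz')
      · exact hcw (H w hw haw)

lemma zmod_numeral_ne_zero {k c : ℕ} (h1 : 0 < c) (h2 : c < k) :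
    ((c : ℕ) : ZMod k) ≠ 0 := by
  intro hh
  have h3 : ((c : ℕ) : ZMod k) = ((0 : ℕ) : ZMod k) := by simpa using hh
  have := (zmod_cast_inj h2 (by omega)).1 h3
  omega

lemma pan_to_bad (hB : IsBuoy G ℓ B)
    (h : ∃ (k : ℕ) (f : ZMod k → V) (x : V), IsHole G k f ∧
        Set.range f ⊆ ⋃ j, B j ∧ x ∈ ⋃ j, B j ∧ x ∉ Set.range f ∧
        ∃! t : ZMod k, G.Adj x (f t)) :
    ∃ i : ZMod ℓ, ¬ G.IsClique (B (i - 1) ∪ B i) ∧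
      ¬ G.IsClique (B i ∪ B (i + 1)) := by
  obtain ⟨hl, hne, hclique, hdisj, hnext, hprev, hfar⟩ := hB
  haveI : Fact (1 < ℓ) := ⟨by omega⟩
  haveI : NeZero ℓ := ⟨by omega⟩
  by_contra hcon
  have hP : ∀ i : ZMod ℓ, G.IsClique (B (i - 1) ∪ B i) ∨
      G.IsClique (B i ∪ B (i + 1)) := by
    intro i
    by_contra hc
    push_neg at hc
    exact hcon ⟨i, hc.1, hc.2⟩
  obtain ⟨k, f, x, ⟨hk4, hinj, hadj⟩, hrange, hxU, hxnr, huniq⟩ := h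
  haveI : NeZero k := ⟨by omega⟩
  have hfB : ∀ j : ZMod k, ∃ q, f j ∈ B q := fun j => Set.mem_iUnion.1 (hrange ⟨j, rfl⟩)
  choose β hβ using hfB
  obtain ⟨t, hx⟩ := Set.mem_iUnion.1 hxU
  have hxne : ∀ i : ZMod k, x ≠ f i := fun i hh => hxnr ⟨i, hh.symm⟩
  obtain ⟨i0, hi0, hiuniq⟩ := huniq
  have twon : ∀ i1 i2 : ZMod k, i1 ≠ i2 → G.Adj x (f i1) → G.Adj x (f i2) → False :=
    fun i1 i2 hne12 a1 a2 => hne12 ((hiuniq i1 a1).trans (hiuniq i2 a2).symm)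
  have hconsec : ∀ j : ZMod k, G.Adj (f j) (f (j + 1)) :=
    fun j => (hadj j (j + 1)).2 (Or.inl rfl)
  have hstep : ∀ j : ZMod k, β (j + 1) = β j ∨ β (j + 1) = β j + 1 ∨
      β (j + 1) = β j - 1 := by
    intro j
    by_contra hc
    push_neg at hc
    exact hfar (β j) (β (j + 1)) hc.1 hc.2.1 hc.2.2 (f j) (hβ j) (f (j + 1))
      (hβ (j + 1)) (hconsec j)
  have hsame : ∀ j j' : ZMod k, β j = β j' → j' ≠ j → j' ≠ j + 1 → j ≠ j' + 1 →
      False := by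
    intro j j' he n1 n2 n3
    have hne' : f j ≠ f j' := fun hh => n1 (hinj hh).symm
    have : G.Adj (f j) (f j') := hclique (β j) (hβ j) (he ▸ hβ j') hne'
    rcases (hadj j j').1 this with h | h
    · exact n2 h
    · exact n3 h
  by_cases hsurj : ∀ p : ZMod ℓ, ∃ j : ZMod k, β j = p
  · -- hole visits every bag : x gets two neighbours on the hole
    rcases hP t with hC | hC
    · obtain ⟨j1, hj1⟩ := hsurj (t - 1)
      obtain ⟨j2, hj2⟩ := hsurj t
      have ha1 : G.Adj x (f j1) :=
        hC (Set.mem_union_right _ hx) (Set.mem_union_left _ (hj1 ▸ hβ j1)) (hxne j1)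
      have ha2 : G.Adj x (f j2) :=
        hclique t hx (hj2 ▸ hβ j2) (hxne j2)
      have : j1 = j2 := (hiuniq j1 ha1).trans (hiuniq j2 ha2).symm
      rw [this, hj2] at hj1
      exact zmod_numeral_ne_zero (k := ℓ) (c := 1) (by omega) (by omega)
        (by push_cast; linear_combination hj1)
    · obtain ⟨j1, hj1⟩ := hsurj (t + 1)
      obtain ⟨j2, hj2⟩ := hsurj t
      have ha1 : G.Adj x (f j1) :=
        hC (Set.mem_union_left _ hx) (Set.mem_union_right _ (hj1 ▸ hβ j1)) (hxne j1)
      have ha2 : G.Adj x (f j2) :=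
        hclique t hx (hj2 ▸ hβ j2) (hxne j2)
      have : j1 = j2 := (hiuniq j1 ha1).trans (hiuniq j2 ha2).symm
      rw [this, hj2] at hj1
      exact zmod_numeral_ne_zero (k := ℓ) (c := 1) (by omega) (by omega)
        (by push_cast; linear_combination -hj1)
  · -- some bag is missed : the hole lives in two consecutive bags, k = 4
    push_neg at hsurj
    obtain ⟨m, hm⟩ := hsurj
    set g : ZMod k → ℕ := fun j => (β j - m).val with hgdef
    have hvalk : ∀ y : ZMod k, ((y.val : ℕ) : ZMod k) = y :=
      fun y => (ZMod.natCast_val y).trans (ZMod.cast_id _ _)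
    have hvall : ∀ y : ZMod ℓ, ((y.val : ℕ) : ZMod ℓ) = y :=
      fun y => (ZMod.natCast_val y).trans (ZMod.cast_id _ _)
    have hg1 : ∀ j, 1 ≤ g j ∧ g j ≤ ℓ - 1 := by
      intro j
      have h1 : β j - m ≠ 0 := sub_ne_zero.2 (hm j)
      have h2 : g j ≠ 0 := fun hh => h1 (by
        rw [← hvall (β j - m), show (β j - m).val = g j from rfl, hh]; simp)
      have h3 : g j < ℓ := ZMod.val_lt _
      exact ⟨by omega, by omega⟩
    have hβg : ∀ j, β j = m + ((g j : ℕ) : ZMod ℓ) := by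
      intro j
      rw [show ((g j : ℕ) : ZMod ℓ) = β j - m from hvall _]
      ring
    have hgeq : ∀ j j', g j = g j' → β j = β j' := by
      intro j j' hh
      rw [hβg j, hβg j', hh]
    have hsucc : ∀ j j' : ZMod k, β j' = β j + 1 → g j' = g j + 1 := by
      intro j j' hh
      have h1 := hg1 j
      have h2 := hg1 j'
      have key : g j' = (g j + 1) % ℓ := by
        show (β j' - m).val = _
        rw [hh, show β j + 1 - m = (β j - m) + 1 by ring, ZMod.val_add, ZMod.val_one]
      rcases Nat.lt_or_ge (g j + 1) ℓ with hlt | hge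
      · rw [Nat.mod_eq_of_lt hlt] at key; omega
      · exfalso
        have : (g j + 1) % ℓ = 0 := by
          rw [show g j + 1 = ℓ by omega, Nat.mod_self]
        omega
    have hgstep : ∀ j : ZMod k, g (j + 1) ≤ g j + 1 ∧ g j ≤ g (j + 1) + 1 := by
      intro j
      rcases hstep j with h | h | h
      · have : g (j + 1) = g j := by show (β (j+1) - m).val = (β j - m).val; rw [h]
        omega
      · have := hsucc j (j + 1) h
        omega
      · have : β j = β (j + 1) + 1 := by rw [h]; ring
        have := hsucc (j + 1) j this
        omega
    obtain ⟨j0, -, hj0max⟩ := Finset.exists_max_image (Finset.univ : Finset (ZMod k)) g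
      ⟨0, Finset.mem_univ 0⟩
    set M := g j0 with hMdef
    have hmax : ∀ j, g j ≤ M := fun j => hj0max j (Finset.mem_univ j)
    have hdesc : ∃ j, g j = M ∧ g (j + 1) ≠ M := by
      by_contra hc
      push_neg at hc
      have hall : ∀ n : ℕ, g (j0 + (n : ZMod k)) = M := by
        intro n
        induction n with
        | zero => simp [hMdef]
        | succ n ih =>
          have := hc _ ih
          rwa [show j0 + ((n + 1 : ℕ) : ZMod k) = j0 + (n : ZMod k) + 1 by
            push_cast; ring]
      have hallj : ∀ j : ZMod k, g j = M := by
        intro j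
        have := hall (j - j0).val
        rwa [show j0 + (((j - j0).val : ℕ) : ZMod k) = j by rw [hvalk]; ring] at this
      refine hsame 0 2 (hgeq _ _ (by rw [hallj, hallj])) ?_ ?_ ?_
      · intro hh
        exact zmod_numeral_ne_zero (k := k) (c := 2) (by omega) (by omega)
          (by push_cast; linear_combination hh)
      · intro hh
        exact zmod_numeral_ne_zero (k := k) (c := 1) (by omega) (by omega)
          (by push_cast; linear_combination hh)
      · intro hh
        exact zmod_numeral_ne_zero (k := k) (c := 3) (by omega) (by omega)
          (by push_cast; linear_combination -hh)
    obtain ⟨j, hjM, hjne⟩ := hdesc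
    have hstepj := hgstep j
    have hgj1 := hg1 (j + 1)
    have hj1M : g (j + 1) = M - 1 := by
      have := hmax (j + 1)
      omega
    have hM2 : 2 ≤ M := by
      have := hg1 j
      have := hg1 (j + 1)
      omega
    have hstepjm := hgstep (j - 1)
    rw [show j - 1 + 1 = j by ring] at hstepjm
    have hjm : g (j - 1) = M - 1 ∨ g (j - 1) = M := by
      have := hmax (j - 1)
      omega
    rcases hjm with hjm | hjm
    · -- f (j-1) and f (j+1) in the same bag : contradiction
      refine hsame (j - 1) (j + 1) (hgeq _ _ (by rw [hjm, hj1M])) ?_ ?_ ?_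
      · intro hh
        exact zmod_numeral_ne_zero (k := k) (c := 2) (by omega) (by omega)
          (by push_cast; linear_combination hh)
      · intro hh
        exact zmod_numeral_ne_zero (k := k) (c := 1) (by omega) (by omega)
          (by push_cast; linear_combination hh)
      · intro hh
        exact zmod_numeral_ne_zero (k := k) (c := 3) (by omega) (by omega)
          (by push_cast; linear_combination -hh)
    · have hstepjm2 := hgstep (j - 2)
      rw [show j - 2 + 1 = j - 1 by ring] at hstepjm2
      have hjm2 : g (j - 2) = M - 1 ∨ g (j - 2) = M := by
        have := hmax (j - 2)
        omega
      rcases hjm2 with hjm2 | hjm2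
      · -- f (j-2) and f (j+1) in the same bag
        by_cases hk4' : k = 4
        · -- the hole is a C4 inside two consecutive bags
          subst hk4'
          set p := β (j + 1) with hpdef
          have hMnat : ((M - 1 : ℕ) : ZMod ℓ) + 1 = ((M : ℕ) : ZMod ℓ) := by
            have h' : (M - 1) + 1 = M := by omega
            have := congrArg (fun n : ℕ => ((n : ℕ) : ZMod ℓ)) h'
            push_cast at this
            push_cast
            linear_combination this
          have hp1 : β j = p + 1 := by
            rw [hβg j, hjM, hpdef, hβg (j + 1), hj1M]
            linear_combination -hMnat
          have hfj : f j ∈ B (p + 1) := hp1 ▸ hβ j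
          have hfjm : f (j - 1) ∈ B (p + 1) := by
            have h' : β (j - 1) = p + 1 := by
              rw [show β (j - 1) = β j from hgeq _ _ (by rw [hjm, hjM]), hp1]
            exact h' ▸ hβ (j - 1)
          have hfj1 : f (j + 1) ∈ B p := hβ (j + 1)
          have hfjm2 : f (j - 2) ∈ B p := by
            have h' : β (j - 2) = p := by
              rw [hpdef]; exact hgeq _ _ (by rw [hjm2, hj1M])
            exact h' ▸ hβ (j - 2)
          -- B p ∪ B (p+1) is not a clique
          have hnc : ¬ G.IsClique (B p ∪ B (p + 1)) := by
            intro hcl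
            have hne14 : f (j + 1) ≠ f (j - 1) := by
              intro hh
              have := hinj hh
              exact absurd (show (2 : ZMod 4) = 0 by linear_combination this)
                (by decide)
            have hA : G.Adj (f (j + 1)) (f (j - 1)) :=
              hcl (Set.mem_union_left _ hfj1) (Set.mem_union_right _ hfjm) hne14
            rcases (hadj (j + 1) (j - 1)).1 hA with hh | hh
            · exact absurd (show (3 : ZMod 4) = 0 by linear_combination -hh) (by decide)
            · exact absurd (show (1 : ZMod 4) = 0 by linear_combination hh) (by decide)
          have hPp : G.IsClique (B (p - 1) ∪ B p) := by
            rcases hP p with h' | h'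
            · exact h'
            · exact absurd h' hnc
          have hPp1 : G.IsClique (B (p + 1) ∪ B (p + 1 + 1)) := by
            rcases hP (p + 1) with h' | h'
            · rw [show p + 1 - 1 = p by ring] at h'
              exact absurd h' hnc
            · exact h'
          -- locate the bag of x
          have hβi0 : β i0 = t ∨ β i0 = t + 1 ∨ β i0 = t - 1 := by
            by_contra hc
            push_neg at hc
            exact hfar t (β i0) hc.1 hc.2.1 hc.2.2 x hx (f i0) (hβ i0) hi0
          have hβi0p : β i0 = p ∨ β i0 = p + 1 := by
            have hcov : i0 = j - 2 ∨ i0 = j - 1 ∨ i0 = j ∨ i0 = j + 1 := by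
              have hd : ∀ d : ZMod 4, d = -2 ∨ d = -1 ∨ d = 0 ∨ d = 1 := by decide
              rcases hd (i0 - j) with h' | h' | h' | h'
              · left; linear_combination h'
              · right; left; linear_combination h'
              · right; right; left; linear_combination h'
              · right; right; right; linear_combination h'
            rcases hcov with h' | h' | h' | h'
            · left; rw [h']; exact hgeq _ _ (by rw [hjm2, hj1M])
            · right; rw [h']
              have : β (j - 1) = β j := hgeq _ _ (by rw [hjm, hjM])
              rw [this, hp1]
            · right; rw [h', hp1]
            · left; rw [h']
          have ht4 : t = p ∨ t = p + 1 ∨ t = p - 1 ∨ t = p + 1 + 1 := by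
            rcases hβi0 with h1 | h1 | h1 <;> rcases hβi0p with h2 | h2
            · left; rw [← h1, h2]
            · right; left; rw [← h1, h2]
            · right; right; left; rw [h1] at h2; linear_combination h2
            · left; rw [h1] at h2; linear_combination h2
            · right; left; rw [h1] at h2; linear_combination h2
            · right; right; right; rw [h1] at h2; linear_combination h2
          have hne31 : j + 1 ≠ j - 2 := by
            intro hh
            exact absurd (show (3 : ZMod 4) = 0 by linear_combination hh) (by decide)
          have hne01 : j ≠ j - 1 := by
            intro hh
            exact absurd (show (1 : ZMod 4) = 0 by linear_combination hh) (by decide)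
          rcases ht4 with h' | h' | h' | h'
          · -- x ∈ B p together with f (j+1), f (j-2)
            rw [h'] at hx
            exact twon (j + 1) (j - 2) hne31
              (hclique p hx hfj1 (hxne _)) (hclique p hx hfjm2 (hxne _))
          · rw [h'] at hx
            exact twon j (j - 1) hne01
              (hclique (p + 1) hx hfj (hxne _)) (hclique (p + 1) hx hfjm (hxne _))
          · rw [h'] at hx
            exact twon (j + 1) (j - 2) hne31
              (hPp (Set.mem_union_left _ hx) (Set.mem_union_right _ hfj1) (hxne _))
              (hPp (Set.mem_union_left _ hx) (Set.mem_union_right _ hfjm2) (hxne _))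
          · rw [h'] at hx
            exact twon j (j - 1) hne01
              (hPp1 (Set.mem_union_right _ hx) (Set.mem_union_left _ hfj) (hxne _))
              (hPp1 (Set.mem_union_right _ hx) (Set.mem_union_left _ hfjm) (hxne _))
        · -- k ≠ 4 : contradiction via hsame (j-2) (j+1)
          refine hsame (j - 2) (j + 1) (hgeq _ _ (by rw [hjm2, hj1M])) ?_ ?_ ?_
          · intro hh
            exact zmod_numeral_ne_zero (k := k) (c := 3) (by omega) (by omega)
              (by push_cast; linear_combination hh)
          · intro hh
            exact zmod_numeral_ne_zero (k := k) (c := 2) (by omega) (by omega)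
              (by push_cast; linear_combination hh)
          · intro hh
            exact zmod_numeral_ne_zero (k := k) (c := 4) (by omega) (by omega)
              (by push_cast; linear_combination -hh)
      · -- f (j-2) and f j in the same bag : contradiction
        refine hsame (j - 2) j (hgeq _ _ (by rw [hjm2, hjM])) ?_ ?_ ?_
        · intro hh
          exact zmod_numeral_ne_zero (k := k) (c := 2) (by omega) (by omega)
            (by push_cast; linear_combination hh)
        · intro hh
          exact zmod_numeral_ne_zero (k := k) (c := 1) (by omega) (by omega)
            (by push_cast; linear_combination hh)
        · intro hh
          exact zmod_numeral_ne_zero (k := k) (c := 3) (by omega) (by omega)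
            (by push_cast; linear_combination -hh)

end Buoy

theorem stmt_17 {V : Type*} (G : SimpleGraph V)
    (ℓ : ℕ) (hodd : Odd ℓ) (B : ZMod ℓ → Set V) (hB : IsBuoy G ℓ B)
    (horder : ∀ i : ZMod ℓ, ∀ a ∈ B i, ∀ b ∈ B i,
      (∀ z ∈ ⋃ j, B j, z ≠ b → G.Adj a z → G.Adj b z) ∨
      (∀ z ∈ ⋃ j, B j, z ≠ a → G.Adj b z → G.Adj a z)) :
    -- (i): some a strictly dominates b w.r.t. B_{i-1}, but b does not dominate
    -- a w.r.t. B_{i+1}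
    ((∃ (i : ZMod ℓ) (a : V) (b : V), a ∈ B i ∧ b ∈ B i ∧
        (∀ z ∈ B (i - 1), G.Adj b z → G.Adj a z) ∧
        (∃ z ∈ B (i - 1), G.Adj a z ∧ ¬ G.Adj b z) ∧
        ¬ (∀ z ∈ B (i + 1), G.Adj a z → G.Adj b z)) ↔
    -- (ii): the buoy contains an induced pan
      (∃ (k : ℕ) (f : ZMod k → V) (x : V), IsHole G k f ∧
        Set.range f ⊆ ⋃ j, B j ∧ x ∈ ⋃ j, B j ∧ x ∉ Set.range f ∧
        ∃! i : ZMod k, G.Adj x (f i))) ∧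
    -- (ii) ↔ (iii): some index with neither pair of consecutive bags a clique
    ((∃ (k : ℕ) (f : ZMod k → V) (x : V), IsHole G k f ∧
        Set.range f ⊆ ⋃ j, B j ∧ x ∈ ⋃ j, B j ∧ x ∉ Set.range f ∧
        ∃! i : ZMod k, G.Adj x (f i)) ↔
      (∃ i : ZMod ℓ, ¬ G.IsClique (B (i - 1) ∪ B i) ∧
        ¬ G.IsClique (B i ∪ B (i + 1)))) := by
  constructor
  · exact ⟨fun h => i_to_pan hB h, fun h => bad_to_i hB horder (pan_to_bad hB h)⟩
  · exact ⟨fun h => pan_to_bad hB h, fun h => i_to_pan hB (bad_to_i hB horder h)⟩
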